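/- arXiv:1312.7515 — 3 statements merged into one kernel-verified Lean document; each statement's English description precedes it below -/
import Mathlib

section
/- Let T = conv(w_0,…,w_n) ⊆ [0,1]^n be an n-simplex whose vertices w_0,…,w_n are affinely independent points with rational coordinates. For each i = 0,…,n let l_i : ℝ^n → ℝ be the unique affine map satisfying l_i(w_i) = 1/den(w_i) and l_i(w_j) = 0 for all j ≠ i. Then T is regular if and only if every l_i has integer coefficients. -/
namespace MVPaper

/-- The unit `n`-cube `[0,1]^n` as a subset of `ℝ^n`. -/
def Cube (n : ℕ) : Set (Fin n → ℝ) := {x | ∀ i, 0 ≤ x i ∧ x i ≤ 1}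

/-- An affine function `ℝ^n → ℝ` with integer coefficients. -/
def IsIntAffine {n : ℕ} (l : (Fin n → ℝ) → ℝ) : Prop :=
  ∃ (b : ℤ) (m : Fin n → ℤ), ∀ x, l x = (b : ℝ) + ∑ j, (m j : ℝ) * x j

/-- An affine function `ℝ^n → ℝ` with arbitrary real coefficients. -/
def IsRealAffine {n : ℕ} (l : (Fin n → ℝ) → ℝ) : Prop :=
  ∃ (b : ℝ) (m : Fin n → ℝ), ∀ x, l x = b + ∑ j, m j * x j

/-- A McNaughton function on `[0,1]^n`: continuous, `[0,1]`-valued, and at every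
point it agrees with one of finitely many integer affine functions. -/
def IsMcNaughton {n : ℕ} (f : Cube n → ℝ) : Prop :=
  Continuous f ∧ (∀ x, 0 ≤ f x ∧ f x ≤ 1) ∧
    ∃ (t : ℕ) (l : Fin t → ((Fin n → ℝ) → ℝ)),
      (∀ i, IsIntAffine (l i)) ∧ ∀ x : Cube n, ∃ i, f x = l i (x : Fin n → ℝ)

/-- `M([0,1]^n)`: the set of all McNaughton functions on the `n`-cube. -/
def McNn (n : ℕ) : Set (Cube n → ℝ) := {f | IsMcNaughton f}

/-! ### Pointwise MV-operations on `[0,1]`-valued functions -/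

def mvZero (α : Type*) : α → ℝ := fun _ => 0
def mvAdd {α : Type*} (f g : α → ℝ) : α → ℝ := fun x => min (f x + g x) 1
def mvNeg {α : Type*} (f : α → ℝ) : α → ℝ := fun x => 1 - f x

/-- A set of functions containing the constant `0` and closed under the pointwise
MV-operations `⊕` and `¬`. -/
def MVClosed {α : Type*} (A : Set (α → ℝ)) : Prop :=
  mvZero α ∈ A ∧ (∀ f ∈ A, ∀ g ∈ A, mvAdd f g ∈ A) ∧ ∀ f ∈ A, mvNeg f ∈ A

/-- The subalgebra generated by `S`: the smallest set containing `S`, containing the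
constant `0` and closed under the pointwise MV-operations. -/
def mvGen {α : Type*} (S : Set (α → ℝ)) : Set (α → ℝ) :=
  ⋂₀ {A : Set (α → ℝ) | MVClosed A ∧ S ⊆ A}

/-- A set of functions separates points. -/
def Separates {α β : Type*} (S : Set (α → β)) : Prop :=
  ∀ x y : α, x ≠ y → ∃ f ∈ S, f x ≠ f y

/-! ### Abstract MV-algebras -/

/-- Signature of an MV-algebra: a constant `0`, a binary `⊕` and a unary `¬`. -/
structure MVStr (α : Type*) where
  zero : α
  add : α → α → α
  neg : α → α

/-- The MV-algebra axioms. -/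
def MVStr.IsMV {α : Type*} (M : MVStr α) : Prop :=
  (∀ x y z, M.add (M.add x y) z = M.add x (M.add y z)) ∧
  (∀ x y, M.add x y = M.add y x) ∧
  (∀ x, M.add x M.zero = x) ∧
  (∀ x, M.neg (M.neg x) = x) ∧
  (∀ x, M.add x (M.neg M.zero) = M.neg M.zero) ∧
  ∀ x y, M.add (M.neg (M.add (M.neg x) y)) y = M.add (M.neg (M.add (M.neg y) x)) x

/-- Homomorphism of abstract MV-algebras. -/
def IsMVHom {α β : Type*} (M : MVStr α) (N : MVStr β) (φ : α → β) : Prop :=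
  φ M.zero = N.zero ∧ (∀ x y, φ (M.add x y) = N.add (φ x) (φ y)) ∧
    ∀ x, φ (M.neg x) = N.neg (φ x)

/-- Homomorphism from a set of `[0,1]`-valued functions (with the pointwise
MV-operations) into an abstract MV-algebra. -/
def IsMVHomOfSet {α γ : Type*} (B : Set (α → ℝ)) (Mc : MVStr γ) (h : B → γ) : Prop :=
  (∀ f : B, (f : α → ℝ) = mvZero α → h f = Mc.zero) ∧
  (∀ f g k : B, (k : α → ℝ) = mvAdd (f : α → ℝ) (g : α → ℝ) → h k = Mc.add (h f) (h g)) ∧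
  ∀ f g : B, (g : α → ℝ) = mvNeg (f : α → ℝ) → h g = Mc.neg (h f)

/-- Projectivity of an MV-algebra of `[0,1]`-valued functions: every homomorphism
into the quotient of a surjective homomorphism lifts. -/
def IsProjectiveMVSet {α : Type*} (A : Set (α → ℝ)) : Prop :=
  ∀ (β γ : Type*) (Mb : MVStr β) (Mc : MVStr γ), Mb.IsMV → Mc.IsMV →
    ∀ ψ : β → γ, IsMVHom Mb Mc ψ → Function.Surjective ψ →
      ∀ φ : A → γ, IsMVHomOfSet A Mc φ →
        ∃ θ : A → β, IsMVHomOfSet A Mb θ ∧ ∀ f, ψ (θ f) = φ f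

/-- `A` is an epi-subalgebra of the function MV-algebra `B`: any two MV-homomorphisms
out of `B` agreeing on `A` are equal. -/
def IsEpiSub {α : Type*} (A B : Set (α → ℝ)) : Prop :=
  A ⊆ B ∧
    ∀ (γ : Type*) (Mc : MVStr γ), Mc.IsMV →
      ∀ h g : B → γ, IsMVHomOfSet B Mc h → IsMVHomOfSet B Mc g →
        (∀ f : B, (f : α → ℝ) ∈ A → h f = g f) → h = g

/-- MV-isomorphism between two sets of `[0,1]`-valued functions, each equipped with
the pointwise MV-operations: a bijection preserving `0`, `⊕` and `¬`. -/
def MVIsoSets {α β : Type*} (A : Set (α → ℝ)) (B : Set (β → ℝ)) : Prop :=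
  ∃ φ : A → B, Function.Bijective φ ∧
    (∀ f : A, (f : α → ℝ) = mvZero α → (φ f : β → ℝ) = mvZero β) ∧
    (∀ f g k : A, (k : α → ℝ) = mvAdd (f : α → ℝ) (g : α → ℝ) →
      (φ k : β → ℝ) = mvAdd (φ f : β → ℝ) (φ g : β → ℝ)) ∧
    ∀ f g : A, (g : α → ℝ) = mvNeg (f : α → ℝ) → (φ g : β → ℝ) = mvNeg (φ f : β → ℝ)

/-! ### Rational polyhedra and `M(P)` -/

def IsRatPoint {n : ℕ} (x : Fin n → ℝ) : Prop := ∀ i, ∃ q : ℚ, x i = (q : ℝ)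

/-- A rational polyhedron in `[0,1]^n`: a finite union of convex hulls of finite
sets of rational points of the cube. -/
def IsRatPolyhedron {n : ℕ} (P : Set (Fin n → ℝ)) : Prop :=
  ∃ V : Finset (Finset (Fin n → ℝ)),
    (∀ S ∈ V, ∀ v ∈ S, v ∈ Cube n ∧ IsRatPoint v) ∧
    P = ⋃ S ∈ V, convexHull ℝ (S : Set (Fin n → ℝ))

/-- Restriction of a function on the cube to a subset `P` of the cube. -/
def restrictCube {n : ℕ} {P : Set (Fin n → ℝ)} (hP : P ⊆ Cube n) (f : Cube n → ℝ) :
    P → ℝ :=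
  fun x => f ⟨x.1, hP x.2⟩

/-- `M(P)`: restrictions to `P` of McNaughton functions on `[0,1]^n`. -/
def McNP {n : ℕ} {P : Set (Fin n → ℝ)} (hP : P ⊆ Cube n) : Set (P → ℝ) :=
  {f | ∃ g : Cube n → ℝ, IsMcNaughton g ∧ f = restrictCube hP g}

/-! ### Z-maps and Z-homeomorphisms -/

def IsIntAffineVec {n k : ℕ} (L : (Fin n → ℝ) → (Fin k → ℝ)) : Prop :=
  ∀ j, IsIntAffine fun x => L x j

/-- A Z-map between subsets of cubes: continuous and at every point agreeing with
one of finitely many integer affine maps. -/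
def IsZMap {n k : ℕ} (P : Set (Fin n → ℝ)) (Q : Set (Fin k → ℝ)) (η : P → Q) : Prop :=
  Continuous η ∧
    ∃ (t : ℕ) (L : Fin t → ((Fin n → ℝ) → (Fin k → ℝ))),
      (∀ i, IsIntAffineVec (L i)) ∧ ∀ x : P, ∃ i, (η x : Fin k → ℝ) = L i (x : Fin n → ℝ)

/-- A Z-homeomorphism of `P` onto `Q`: a bijective Z-map whose inverse is a Z-map. -/
def IsZHomeo {n k : ℕ} (P : Set (Fin n → ℝ)) (Q : Set (Fin k → ℝ)) (η : P → Q) : Prop :=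
  IsZMap P Q η ∧ Function.Bijective η ∧
    ∃ θ : Q → P, IsZMap Q P θ ∧ (∀ x, θ (η x) = x) ∧ ∀ y, η (θ y) = y

def ZHomeomorphic {n k : ℕ} (P : Set (Fin n → ℝ)) (Q : Set (Fin k → ℝ)) : Prop :=
  ∃ η : P → Q, IsZHomeo P Q η

/-- Corestriction of a map `η : P → Q` to its image (as a subset of `ℝ^k`). -/
def corestrict {n k : ℕ} {P : Set (Fin n → ℝ)} {Q : Set (Fin k → ℝ)} (η : P → Q) :
    P → ↥(Subtype.val '' Set.range η) :=
  fun x => ⟨(η x : Fin k → ℝ), ⟨η x, ⟨x, rfl⟩, rfl⟩⟩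

/-! ### Denominators, homogeneous correspondents, regular simplexes -/

/-- The denominator of a rational point: the least positive integer `d` such that
`d·x` has integer coordinates. -/
noncomputable def den {n : ℕ} (x : Fin n → ℝ) : ℕ :=
  sInf {d : ℕ | 0 < d ∧ ∀ i, ∃ c : ℤ, (d : ℝ) * x i = (c : ℝ)}

/-- The homogeneous correspondent `x̃ = (den(x)·x, den(x)) ∈ ℤ^{n+1}` of a rational
point `x`. -/
noncomputable def tilde {n : ℕ} (x : Fin n → ℝ) : Fin (n + 1) → ℤ :=
  fun i => if h : (i : ℕ) < n then ⌊(den x : ℝ) * x ⟨(i : ℕ), h⟩⌋ else (den x : ℤ)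

/-- A set of integer vectors extends to a basis of the free abelian group `ℤ^{n+1}`. -/
def ExtendsToBasis {n : ℕ} (S : Set (Fin (n + 1) → ℤ)) : Prop :=
  ∃ b : Module.Basis (Fin (n + 1)) ℤ (Fin (n + 1) → ℤ), S ⊆ Set.range b

/-! ### Rational triangulations of the cube, weights, hats -/

/-- A rational triangulation of `[0,1]^n`, presented as the finite set of the vertex
sets of its simplexes. -/
def IsTriangulation {n : ℕ} (Δ : Finset (Finset (Fin n → ℝ))) : Prop :=
  letI := Classical.decEq (Fin n → ℝ)
  (∀ S ∈ Δ, S.Nonempty ∧ (∀ v ∈ S, v ∈ Cube n ∧ IsRatPoint v) ∧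
      AffineIndependent ℝ (fun v : (S : Set (Fin n → ℝ)) => (v : Fin n → ℝ))) ∧
  (⋃ S ∈ Δ, convexHull ℝ (S : Set (Fin n → ℝ))) = Cube n ∧
  (∀ S ∈ Δ, ∀ S' : Finset (Fin n → ℝ), S' ⊆ S → S'.Nonempty → S' ∈ Δ) ∧
  ∀ S ∈ Δ, ∀ T ∈ Δ,
    convexHull ℝ (S : Set (Fin n → ℝ)) ∩ convexHull ℝ (T : Set (Fin n → ℝ)) =
      convexHull ℝ ((S ∩ T : Finset (Fin n → ℝ)) : Set (Fin n → ℝ))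

/-- The vertex set of a triangulation. -/
noncomputable def vertexSet {n : ℕ} (Δ : Finset (Finset (Fin n → ℝ))) :
    Finset (Fin n → ℝ) :=
  letI := Classical.decEq (Fin n → ℝ)
  Δ.sup id

/-- A regular (unimodular) triangulation: all simplexes are regular. -/
def IsRegularTriangulation {n : ℕ} (Δ : Finset (Finset (Fin n → ℝ))) : Prop :=
  IsTriangulation Δ ∧ ∀ S ∈ Δ, ExtendsToBasis (tilde '' (S : Set (Fin n → ℝ)))

/-- A weighted triangulation: each vertex `v` carries a positive weight dividing
`den v`. -/
def IsWeighted {n : ℕ} (Δ : Finset (Finset (Fin n → ℝ))) (a : (Fin n → ℝ) → ℕ) : Prop :=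
  IsTriangulation Δ ∧ ∀ v ∈ vertexSet Δ, 0 < a v ∧ a v ∣ den v

/-- The hat of a weighted triangulation at the vertex `v`: `[0,1]`-valued, affine on
each simplex of `Δ`, with value `a v / den v` at `v` and `0` at all other vertices. -/
def IsHat {n : ℕ} (Δ : Finset (Finset (Fin n → ℝ))) (a : (Fin n → ℝ) → ℕ)
    (v : Fin n → ℝ) (h : Cube n → ℝ) : Prop :=
  (∀ x, 0 ≤ h x ∧ h x ≤ 1) ∧
  (∀ S ∈ Δ, ∃ l : (Fin n → ℝ) → ℝ, IsRealAffine l ∧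
      ∀ x : Cube n, (x : Fin n → ℝ) ∈ convexHull ℝ (S : Set (Fin n → ℝ)) → h x = l x) ∧
  (∀ x : Cube n, (x : Fin n → ℝ) = v → h x = (a v : ℝ) / (den v : ℝ)) ∧
  ∀ x : Cube n, (x : Fin n → ℝ) ∈ vertexSet Δ → (x : Fin n → ℝ) ≠ v → h x = 0

/-- A family assigning to each vertex of `Δ` its hat. -/
def IsHatFamily {n : ℕ} (Δ : Finset (Finset (Fin n → ℝ))) (a : (Fin n → ℝ) → ℕ)
    (h : (Fin n → ℝ) → Cube n → ℝ) : Prop :=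
  ∀ v ∈ vertexSet Δ, IsHat Δ a v (h v)

/-- The set of hats `H_{Δ,a}` of a weighted triangulation. -/
def hatSet {n : ℕ} (Δ : Finset (Finset (Fin n → ℝ)))
    (h : (Fin n → ℝ) → Cube n → ℝ) : Set (Cube n → ℝ) :=
  (fun v => h v) '' (vertexSet Δ : Set (Fin n → ℝ))

/-! ### Unital ℓ-groups of functions -/

/-- A set of real-valued functions which is a subgroup closed under pointwise
`⊔`, `⊓` and containing the constant function `1`. -/
def LClosed {α : Type*} (G : Set (α → ℝ)) : Prop :=
  (fun _ => (0 : ℝ)) ∈ G ∧ (∀ f ∈ G, ∀ g ∈ G, f + g ∈ G) ∧ (∀ f ∈ G, -f ∈ G) ∧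
    (∀ f ∈ G, ∀ g ∈ G, f ⊔ g ∈ G) ∧ (∀ f ∈ G, ∀ g ∈ G, f ⊓ g ∈ G) ∧
    (fun _ => (1 : ℝ)) ∈ G

/-- The unital ℓ-subgroup generated by `S`. -/
def lGen {α : Type*} (S : Set (α → ℝ)) : Set (α → ℝ) := ⋂₀ {G | LClosed G ∧ S ⊆ G}

/-- A continuous piecewise integer affine real-valued function on the cube. -/
def IsMcNGroupFun {n : ℕ} (f : Cube n → ℝ) : Prop :=
  Continuous f ∧ ∃ (t : ℕ) (l : Fin t → ((Fin n → ℝ) → ℝ)),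
    (∀ i, IsIntAffine (l i)) ∧ ∀ x : Cube n, ∃ i, f x = l i (x : Fin n → ℝ)

/-- `McN_group([0,1]^n)`. -/
def McNGroup (n : ℕ) : Set (Cube n → ℝ) := {f | IsMcNGroupFun f}

/-- Signature of a unital ℓ-group. -/
structure ULStr (α : Type*) where
  zero : α
  add : α → α → α
  neg : α → α
  sup : α → α → α
  inf : α → α → α
  unit : α

def ULStr.nsmul {α : Type*} (M : ULStr α) : ℕ → α → α
  | 0, _ => M.zero
  | k + 1, a => M.add a (M.nsmul k a)

/-- The unital ℓ-group axioms: abelian group, lattice, translation invariance,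
`u ≥ 0`, and `u` is a strong order unit. -/
def ULStr.IsUL {α : Type*} (M : ULStr α) : Prop :=
  (∀ a b c, M.add (M.add a b) c = M.add a (M.add b c)) ∧
  (∀ a b, M.add a b = M.add b a) ∧
  (∀ a, M.add a M.zero = a) ∧
  (∀ a, M.add a (M.neg a) = M.zero) ∧
  (∀ a b, M.sup a b = M.sup b a) ∧
  (∀ a b c, M.sup (M.sup a b) c = M.sup a (M.sup b c)) ∧
  (∀ a b, M.inf a b = M.inf b a) ∧
  (∀ a b c, M.inf (M.inf a b) c = M.inf a (M.inf b c)) ∧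
  (∀ a b, M.sup a (M.inf a b) = a) ∧
  (∀ a b, M.inf a (M.sup a b) = a) ∧
  (∀ a b c, M.sup a b = b → M.sup (M.add a c) (M.add b c) = M.add b c) ∧
  M.sup M.unit M.zero = M.unit ∧
  ∀ g, ∃ m : ℕ, 0 < m ∧ M.sup g (M.nsmul m M.unit) = M.nsmul m M.unit

/-- Homomorphism of abstract unital ℓ-groups: preserves `+`, `⊔`, `⊓` and the unit. -/
def IsULHom {α β : Type*} (M : ULStr α) (N : ULStr β) (φ : α → β) : Prop :=
  (∀ a b, φ (M.add a b) = N.add (φ a) (φ b)) ∧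
  (∀ a b, φ (M.sup a b) = N.sup (φ a) (φ b)) ∧
  (∀ a b, φ (M.inf a b) = N.inf (φ a) (φ b)) ∧
  φ M.unit = N.unit

/-- Homomorphism from a set of real-valued functions (pointwise operations, constant
`1` as unit) into an abstract unital ℓ-group. -/
def IsULHomOfSet {α γ : Type*} (G : Set (α → ℝ)) (N : ULStr γ) (φ : G → γ) : Prop :=
  (∀ f g k : G, (k : α → ℝ) = (f : α → ℝ) + (g : α → ℝ) → φ k = N.add (φ f) (φ g)) ∧
  (∀ f g k : G, (k : α → ℝ) = (f : α → ℝ) ⊔ (g : α → ℝ) → φ k = N.sup (φ f) (φ g)) ∧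
  (∀ f g k : G, (k : α → ℝ) = (f : α → ℝ) ⊓ (g : α → ℝ) → φ k = N.inf (φ f) (φ g)) ∧
  ∀ f : G, (f : α → ℝ) = (fun _ => (1 : ℝ)) → φ f = N.unit

/-- Projectivity of a unital ℓ-group of functions. -/
def IsProjectiveULSet {α : Type*} (G : Set (α → ℝ)) : Prop :=
  ∀ (β γ : Type*) (Mb : ULStr β) (Mc : ULStr γ), Mb.IsUL → Mc.IsUL →
    ∀ ψ : β → γ, IsULHom Mb Mc ψ → Function.Surjective ψ →
      ∀ φ : G → γ, IsULHomOfSet G Mc φ →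
        ∃ θ : G → β, IsULHomOfSet G Mb θ ∧ ∀ f, ψ (θ f) = φ f

/-- Unital ℓ-isomorphism between two sets of real-valued functions with the pointwise
operations and the constant `1` as unit. -/
def ULIsoSets {α β : Type*} (G : Set (α → ℝ)) (H : Set (β → ℝ)) : Prop :=
  ∃ φ : G → H, Function.Bijective φ ∧
    (∀ f g k : G, (k : α → ℝ) = (f : α → ℝ) + (g : α → ℝ) →
      (φ k : β → ℝ) = (φ f : β → ℝ) + (φ g : β → ℝ)) ∧
    (∀ f g k : G, (k : α → ℝ) = (f : α → ℝ) ⊔ (g : α → ℝ) →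
      (φ k : β → ℝ) = (φ f : β → ℝ) ⊔ (φ g : β → ℝ)) ∧
    (∀ f g k : G, (k : α → ℝ) = (f : α → ℝ) ⊓ (g : α → ℝ) →
      (φ k : β → ℝ) = (φ f : β → ℝ) ⊓ (φ g : β → ℝ)) ∧
    ∀ f : G, (f : α → ℝ) = (fun _ => (1 : ℝ)) → (φ f : β → ℝ) = fun _ => (1 : ℝ)

/-! ### MV-terms, their encoding and their evaluation -/

/-- MV-terms: formal expressions built from variables and `0` by `¬` and `⊕`. -/
inductive MVTerm : Type
  | zero : MVTerm
  | var : ℕ → MVTerm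
  | neg : MVTerm → MVTerm
  | add : MVTerm → MVTerm → MVTerm

/-- A term only uses the variables `X_1, …, X_n`. -/
def MVTerm.Good (n : ℕ) : MVTerm → Prop
  | .zero => True
  | .var i => i < n
  | .neg t => t.Good n
  | .add s t => s.Good n ∧ t.Good n

/-- The McNaughton function `τ̂ : [0,1]^n → [0,1]` associated with a term `τ`. -/
noncomputable def MVTerm.eval (n : ℕ) : MVTerm → Cube n → ℝ
  | .zero => fun _ => 0
  | .var i => fun x => if h : i < n then (x : Fin n → ℝ) ⟨i, h⟩ else 0
  | .neg t => fun x => 1 - MVTerm.eval n t x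
  | .add s t => fun x => min (MVTerm.eval n s x + MVTerm.eval n t x) 1

/-- A canonical computable encoding of MV-terms as natural numbers. -/
def MVTerm.code : MVTerm → ℕ
  | .zero => 0
  | .var i => 4 * i + 1
  | .neg t => 4 * t.code + 2
  | .add s t => 4 * Nat.pair s.code t.code + 3

/-- Encoding of a finite list of MV-terms. -/
def encodeTerms (l : List MVTerm) : ℕ := Encodable.encode (l.map MVTerm.code)

/-- Encoding of an instance `(n, [τ_1, …, τ_k])`. -/
def encodeInstance (n : ℕ) (l : List MVTerm) : ℕ := Nat.pair n (encodeTerms l)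

/-- Encoding of an instance `(n, [τ_1, …, τ_k], [σ_1, …, σ_l])`. -/
def encodeInstance2 (n : ℕ) (l₁ l₂ : List MVTerm) : ℕ :=
  Nat.pair n (Nat.pair (encodeTerms l₁) (encodeTerms l₂))

/-- The set of McNaughton functions `{τ̂_1, …, τ̂_k}` of a list of terms. -/
def evalSet (n : ℕ) (l : List MVTerm) : Set (Cube n → ℝ) :=
  {f | ∃ τ ∈ l, f = MVTerm.eval n τ}

/-- The zeroset `Z_σ = σ̂⁻¹(0) ⊆ [0,1]^k` of the term `σ`. -/
def Zset (k : ℕ) (σ : MVTerm) : Set (Fin k → ℝ) :=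
  {x | ∃ h : x ∈ Cube k, MVTerm.eval k σ ⟨x, h⟩ = 0}

theorem Zset_subset_cube (k : ℕ) (σ : MVTerm) : Zset k σ ⊆ Cube k :=
  fun _ hx => hx.elim fun h _ => h

/-- `M(Z_σ)`: restrictions to the zeroset of `σ̂` of McNaughton functions. -/
def McNZ (k : ℕ) (σ : MVTerm) : Set ((Zset k σ) → ℝ) := McNP (Zset_subset_cube k σ)


lemma den_mem {n : ℕ} (x : Fin n → ℝ) (hx : IsRatPoint x) :
    0 < den x ∧ ∀ i, ∃ c : ℤ, (den x : ℝ) * x i = (c : ℝ) := by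
  choose q hq using hx
  have hdpos : 0 < ∏ i, (q i).den := Finset.prod_pos fun i _ => (q i).pos
  have hne : {d : ℕ | 0 < d ∧ ∀ i, ∃ c : ℤ, (d : ℝ) * x i = (c : ℝ)}.Nonempty := by
    refine ⟨∏ i, (q i).den, hdpos, fun i => ?_⟩
    refine ⟨((∏ j, (q j).den) / (q i).den : ℕ) * (q i).num, ?_⟩
    have hdvd : (q i).den ∣ ∏ j, (q j).den := Finset.dvd_prod_of_mem _ (Finset.mem_univ i)
    have h1 : ((∏ j, (q j).den : ℕ) : ℝ) = ((∏ j, (q j).den) / (q i).den : ℕ) * ((q i).den : ℝ) := by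
      rw [← Nat.cast_mul, Nat.div_mul_cancel hdvd]
    have h2 : ((q i).den : ℝ) * (q i : ℝ) = ((q i).num : ℝ) := by
      rw [Rat.cast_def]
      field_simp
    rw [hq i, h1, mul_assoc, h2]
    rw [Int.cast_mul, Int.cast_natCast]
  exact Nat.sInf_mem hne

lemma tilde_cast {n : ℕ} (x : Fin n → ℝ) (hx : IsRatPoint x) (j : Fin (n + 1)) :
    ((tilde x j : ℤ) : ℝ) =
      if h : (j : ℕ) < n then (den x : ℝ) * x ⟨(j : ℕ), h⟩ else (den x : ℝ) := by
  unfold tilde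
  split
  · next h =>
    obtain ⟨c, hc⟩ := (den_mem x hx).2 ⟨(j : ℕ), h⟩
    rw [hc, Int.floor_intCast]
  · simp

open Matrix in
lemma extendsToBasis_iff_isUnit_det {n : ℕ} (v : Fin (n + 1) → Fin (n + 1) → ℤ)
    (hinj : Function.Injective v) :
    ExtendsToBasis (Set.range v) ↔ IsUnit (Matrix.of v).det := by
  classical
  constructor
  · rintro ⟨b, hb⟩
    have hmem : ∀ i, ∃ j, b j = v i := fun i => hb (Set.mem_range_self i)
    choose g hg using hmem
    have hginj : Function.Injective g := fun i j hij => hinj (by rw [← hg i, ← hg j, hij])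
    have hgbij : Function.Bijective g := Finite.injective_iff_bijective.mp hginj
    set e := Equiv.ofBijective g hgbij with he
    set b' := b.reindex e.symm with hb'
    have hb'app : ∀ i, b' i = v i := by
      intro i
      rw [hb', Module.Basis.reindex_apply, Equiv.symm_symm]
      exact hg i
    have hinv : Invertible ((Pi.basisFun ℤ (Fin (n + 1))).toMatrix b') :=
      Module.Basis.invertibleToMatrix _ _
    have hmat : (Pi.basisFun ℤ (Fin (n + 1))).toMatrix b' = (Matrix.of v)ᵀ := by
      ext i j
      simp [Module.Basis.toMatrix_apply, Pi.basisFun_repr, hb'app]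
    rw [hmat] at hinv
    have := Matrix.isUnit_det_of_invertible (Matrix.of v)ᵀ
    rwa [Matrix.det_transpose] at this
  · intro hdet
    have hdet' : IsUnit (Matrix.of v)ᵀ.det := by rwa [Matrix.det_transpose]
    have hinv : Invertible (Matrix.of v)ᵀ := Matrix.invertibleOfIsUnitDet _ hdet'
    refine ⟨(Pi.basisFun ℤ (Fin (n + 1))).map ((Matrix.of v)ᵀ.toLinearEquiv' hinv), ?_⟩
    rintro _ ⟨i, rfl⟩
    refine ⟨i, ?_⟩
    rw [Module.Basis.map_apply]
    have : ((Matrix.of v)ᵀ.toLinearEquiv' hinv) (Pi.basisFun ℤ (Fin (n + 1)) i)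
        = (Matrix.of v)ᵀ.mulVec (Pi.basisFun ℤ (Fin (n + 1)) i) := rfl
    rw [this]
    ext j
    simp [Matrix.mulVec_single, Pi.basisFun_apply]


/-- An `n`-simplex `T = conv(w_0, …, w_n) ⊆ [0,1]^n` with rational
vertices is regular iff all the affine functions `l_i` (with `l_i(w_i) = 1/den(w_i)`
and `l_i(w_j) = 0` for `j ≠ i`) have integer coefficients. -/
theorem regular_simplex_iff_int_coeffs (n : ℕ) (w : Fin (n + 1) → Fin n → ℝ)
    (hind : AffineIndependent ℝ w) (hrat : ∀ i, IsRatPoint (w i))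
    (hcube : ∀ i, w i ∈ Cube n)
    (l : Fin (n + 1) → (Fin n → ℝ) → ℝ)
    (haff : ∀ i, IsRealAffine (l i))
    (hval : ∀ i, l i (w i) = 1 / (den (w i) : ℝ))
    (hzero : ∀ i j, j ≠ i → l i (w j) = 0) :
    ExtendsToBasis (Set.range fun i => tilde (w i)) ↔ ∀ i, IsIntAffine (l i) := by
  classical
  have hden := fun i => den_mem (w i) (hrat i)
  have hdR : ∀ i, (0 : ℝ) < (den (w i) : ℝ) := fun i => by exact_mod_cast (hden i).1
  set A : Matrix (Fin (n + 1)) (Fin (n + 1)) ℤ := Matrix.of (fun i => tilde (w i)) with hAdef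
  have hAcast : ∀ i j, ((A i j : ℤ) : ℝ) =
      if h : (j : ℕ) < n then (den (w i) : ℝ) * w i ⟨(j : ℕ), h⟩ else (den (w i) : ℝ) :=
    fun i j => tilde_cast _ (hrat i) j
  -- key product identity
  have key : ∀ (bC : Fin (n + 1) → ℝ) (mC : Fin (n + 1) → Fin n → ℝ),
      (∀ i x, l i x = bC i + ∑ j, mC i j * x j) →
      A.map (Int.cast : ℤ → ℝ) *
        (Matrix.of fun (k : Fin (n + 1)) (i : Fin (n + 1)) => if h : (k : ℕ) < n then mC i ⟨(k : ℕ), h⟩ else bC i) = 1 := by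
    intro bC mC hrep
    ext i i'
    simp only [Matrix.mul_apply, Matrix.map_apply, Matrix.of_apply]
    have hcalc : ∀ k : Fin (n + 1),
        ((A i k : ℤ) : ℝ) * (if h : (k : ℕ) < n then mC i' ⟨(k : ℕ), h⟩ else bC i')
          = if h : (k : ℕ) < n then (den (w i) : ℝ) * (mC i' ⟨(k : ℕ), h⟩ * w i ⟨(k : ℕ), h⟩)
            else (den (w i) : ℝ) * bC i' := by
      intro k
      rw [hAcast]
      split
      · ring
      · rfl
    rw [Finset.sum_congr rfl fun k _ => hcalc k, Fin.sum_univ_castSucc]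
    have hlast : ¬ ((Fin.last n : Fin (n + 1)) : ℕ) < n := by simp
    rw [dif_neg hlast]
    have hcs : ∀ k : Fin n,
        (if h : ((k.castSucc : Fin (n + 1)) : ℕ) < n
          then (den (w i) : ℝ) * (mC i' ⟨((k.castSucc : Fin (n + 1)) : ℕ), h⟩ * w i ⟨((k.castSucc : Fin (n + 1)) : ℕ), h⟩)
          else (den (w i) : ℝ) * bC i')
        = (den (w i) : ℝ) * (mC i' k * w i k) := by
      intro k
      have hk : ((k.castSucc : Fin (n + 1)) : ℕ) < n := k.isLt
      rw [dif_pos hk]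
      have hmk : (⟨((k.castSucc : Fin (n + 1)) : ℕ), hk⟩ : Fin n) = k := by ext; simp
      rw [hmk]
    rw [Finset.sum_congr rfl fun k _ => hcs k]
    have : (∑ k : Fin n, (den (w i) : ℝ) * (mC i' k * w i k)) + (den (w i) : ℝ) * bC i'
        = (den (w i) : ℝ) * l i' (w i) := by
      rw [hrep i' (w i), ← Finset.mul_sum]
      ring
    rw [this]
    rcases eq_or_ne i' i with h | h
    · subst h
      rw [hval i', Matrix.one_apply_eq, mul_one_div]
      exact div_self (ne_of_gt (hdR i'))
    · rw [hzero i' i h.symm, Matrix.one_apply_ne (Ne.symm h), mul_zero]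
  -- injectivity of tilde ∘ w
  have hvinj : Function.Injective (fun i => tilde (w i)) := by
    intro i j hij
    apply hind.injective
    funext k
    have h2 : ((tilde (w i) (Fin.last n) : ℤ) : ℝ) = ((tilde (w j) (Fin.last n) : ℤ) : ℝ) :=
      congrArg _ (congrFun hij (Fin.last n))
    rw [tilde_cast _ (hrat i), tilde_cast _ (hrat j)] at h2
    have hlast : ¬ ((Fin.last n : Fin (n + 1)) : ℕ) < n := by simp
    rw [dif_neg hlast, dif_neg hlast] at h2
    have h1 : ((tilde (w i) k.castSucc : ℤ) : ℝ) = ((tilde (w j) k.castSucc : ℤ) : ℝ) :=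
      congrArg _ (congrFun hij k.castSucc)
    rw [tilde_cast _ (hrat i), tilde_cast _ (hrat j)] at h1
    have hk : ((k.castSucc : Fin (n + 1)) : ℕ) < n := k.isLt
    rw [dif_pos hk, dif_pos hk] at h1
    have hmk : (⟨((k.castSucc : Fin (n + 1)) : ℕ), hk⟩ : Fin n) = k := by
      ext; simp
    rw [hmk] at h1
    rw [← h2] at h1
    exact mul_left_cancel₀ (ne_of_gt (hdR i)) h1
  rw [show (Set.range fun i => tilde (w i)) = Set.range (fun i => tilde (w i)) from rfl,
    extendsToBasis_iff_isUnit_det _ hvinj]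
  constructor
  · -- IsUnit det → int affine
    intro hdet i
    have hInv : Invertible A := A.invertibleOfIsUnitDet hdet
    set D := ⅟A with hD
    have hAD : A * D = 1 := mul_invOf_self A
    have hDA : D * A = 1 := invOf_mul_self A
    choose bR mR hrepR using haff
    set E : Matrix (Fin (n + 1)) (Fin (n + 1)) ℝ :=
      Matrix.of fun (k : Fin (n + 1)) (i' : Fin (n + 1)) => if h : (k : ℕ) < n then mR i' ⟨(k : ℕ), h⟩ else bR i' with hE
    have hBE : A.map (Int.cast : ℤ → ℝ) * E = 1 := key bR mR hrepR
    have hmap : ∀ M N : Matrix (Fin (n + 1)) (Fin (n + 1)) ℤ,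
        (M * N).map (Int.cast : ℤ → ℝ) = M.map Int.cast * N.map Int.cast := by
      intro M N
      exact Matrix.map_mul (f := Int.castRingHom ℝ)
    have hDB : D.map (Int.cast : ℤ → ℝ) * A.map Int.cast = 1 := by
      rw [← hmap, hDA, Matrix.map_one _ Int.cast_zero Int.cast_one]
    have hED : E = D.map (Int.cast : ℤ → ℝ) := by
      calc E = 1 * E := (one_mul E).symm
      _ = (D.map (Int.cast : ℤ → ℝ) * A.map Int.cast) * E := by rw [hDB]
      _ = D.map (Int.cast : ℤ → ℝ) * (A.map Int.cast * E) := by rw [mul_assoc]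
      _ = D.map (Int.cast : ℤ → ℝ) := by rw [hBE, mul_one]
    refine ⟨D (Fin.last n) i, fun j => D j.castSucc i, fun x => ?_⟩
    have hb : bR i = ((D (Fin.last n) i : ℤ) : ℝ) := by
      have := congrFun (congrFun hED (Fin.last n)) i
      rw [hE] at this
      simp only [Matrix.of_apply, Matrix.map_apply] at this
      rw [dif_neg (by simp : ¬ ((Fin.last n : Fin (n + 1)) : ℕ) < n)] at this
      exact this
    have hm : ∀ j : Fin n, mR i j = ((D j.castSucc i : ℤ) : ℝ) := by
      intro j
      have := congrFun (congrFun hED j.castSucc) i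
      have hk : ((j.castSucc : Fin (n + 1)) : ℕ) < n := j.isLt
      rw [hE] at this
      simp only [Matrix.of_apply, dif_pos hk, Matrix.map_apply] at this
      have hmk : (⟨((j.castSucc : Fin (n + 1)) : ℕ), hk⟩ : Fin n) = j := by ext; simp
      rwa [hmk] at this
    rw [hrepR i x, hb]
    congr 1
    exact Finset.sum_congr rfl fun j _ => by rw [hm j]
  · -- int affine → IsUnit det
    intro hint
    choose b₀ m₀ hrep₀ using hint
    have hBE : A.map (Int.cast : ℤ → ℝ) *
        (Matrix.of fun (k : Fin (n + 1)) (i : Fin (n + 1)) => if h : (k : ℕ) < n then ((m₀ i ⟨(k : ℕ), h⟩ : ℤ) : ℝ) else ((b₀ i : ℤ) : ℝ)) = 1 :=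
      key (fun i => (b₀ i : ℝ)) (fun i j => (m₀ i j : ℝ)) hrep₀
    set E₀ : Matrix (Fin (n + 1)) (Fin (n + 1)) ℤ :=
      Matrix.of fun (k : Fin (n + 1)) (i : Fin (n + 1)) => if h : (k : ℕ) < n then m₀ i ⟨(k : ℕ), h⟩ else b₀ i with hE₀
    have hcast : (Matrix.of fun (k : Fin (n + 1)) (i : Fin (n + 1)) => if h : (k : ℕ) < n then ((m₀ i ⟨(k : ℕ), h⟩ : ℤ) : ℝ) else ((b₀ i : ℤ) : ℝ))
        = E₀.map (Int.cast : ℤ → ℝ) := by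
      ext k i
      simp only [Matrix.of_apply, Matrix.map_apply, hE₀]
      split <;> rfl
    rw [hcast] at hBE
    have hmap : (A * E₀).map (Int.cast : ℤ → ℝ) = A.map Int.cast * E₀.map Int.cast :=
      Matrix.map_mul (f := Int.castRingHom ℝ)
    have hAE : A * E₀ = 1 := by
      ext i j
      have := congrFun (congrFun (hmap.trans hBE) i) j
      simp only [Matrix.map_apply] at this
      have h1 : ((1 : Matrix (Fin (n + 1)) (Fin (n + 1)) ℝ) i j)
          = (((1 : Matrix (Fin (n + 1)) (Fin (n + 1)) ℤ) i j : ℤ) : ℝ) := by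
        rcases eq_or_ne i j with h | h
        · subst h; simp
        · simp [Matrix.one_apply_ne h]
      rw [h1] at this
      exact_mod_cast this
    exact IsUnit.of_mul_eq_one _ (by rw [← Matrix.det_mul, hAE, Matrix.det_one])

end MVPaper
end

section
/- Let Δ be a regular triangulation of [0,1]^n with vertices v_1,…,v_u, and for each i let a_i ≥ 1 be an integer dividing den(v_i). Then (Δ,(a_1,…,a_u)) is a weighted triangulation of [0,1]^n whose set of hats H_{Δ,a} is basic, i.e., every hat h_i of (Δ,(a_1,…,a_u)) is a McNaughton function on [0,1]^n. -/
namespace MVPaper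

lemma tilde_castSucc {n : ℕ} (x : Fin n → ℝ) (hx : IsRatPoint x) (i : Fin n) :
    ((tilde x i.castSucc : ℤ) : ℝ) = (den x : ℝ) * x i := by
  obtain ⟨c, hc⟩ := (den_mem x hx).2 i
  have h : ((i.castSucc : ℕ)) < n := i.isLt
  simp only [tilde, dif_pos h]
  have : (⟨((i.castSucc : ℕ)), h⟩ : Fin n) = i := by ext; simp
  rw [this, hc]
  simp

lemma tilde_last {n : ℕ} (x : Fin n → ℝ) : tilde x (Fin.last n) = (den x : ℤ) := by
  simp [tilde]

lemma tilde_inj {n : ℕ} {x y : Fin n → ℝ} (hx : IsRatPoint x) (hy : IsRatPoint y)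
    (h : tilde x = tilde y) : x = y := by
  have hdx : 0 < den x := (den_mem x hx).1
  have hd : den x = den y := by
    have := congrFun h (Fin.last n)
    rw [tilde_last, tilde_last] at this
    exact_mod_cast this
  funext i
  have h1 := tilde_castSucc x hx i
  have h2 := tilde_castSucc y hy i
  rw [congrFun h i.castSucc, h2] at h1
  have : (den x : ℝ) ≠ 0 := by exact_mod_cast hdx.ne'
  rw [hd] at h1
  have hdy : (den y : ℝ) ≠ 0 := by rw [← hd]; exact this
  exact (mul_left_cancel₀ hdy h1).symm

lemma affine_combo {n : ℕ} (A : Finset (Fin n → ℝ)) (w : (Fin n → ℝ) → ℝ)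
    (hw : ∑ y ∈ A, w y = 1) {l : (Fin n → ℝ) → ℝ} (hl : IsRealAffine l) :
    l (A.centerMass w id) = ∑ y ∈ A, w y * l y := by
  obtain ⟨b, m, hbm⟩ := hl
  rw [Finset.centerMass_eq_of_sum_1 _ _ hw, hbm]
  have happ : ∀ j, (∑ y ∈ A, w y • id y) j = ∑ y ∈ A, w y * y j := by
    intro j; rw [Finset.sum_apply]; rfl
  calc b + ∑ j, m j * (∑ y ∈ A, w y • id y) j
      = b + ∑ j, ∑ y ∈ A, w y * (m j * y j) := by
        congr 1; refine Finset.sum_congr rfl fun j _ => ?_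
        rw [happ j, Finset.mul_sum]; exact Finset.sum_congr rfl fun y _ => by ring
    _ = b * 1 + ∑ y ∈ A, ∑ j, w y * (m j * y j) := by rw [Finset.sum_comm, mul_one]
    _ = ∑ y ∈ A, w y * l y := by
        rw [← hw, Finset.mul_sum, ← Finset.sum_add_distrib]
        refine Finset.sum_congr rfl fun y _ => ?_
        rw [hbm y, mul_add, Finset.mul_sum, mul_comm (w y) b]

lemma affine_eq_on_hull {n : ℕ} {A : Finset (Fin n → ℝ)} {l₁ l₂ : (Fin n → ℝ) → ℝ}
    (h1 : IsRealAffine l₁) (h2 : IsRealAffine l₂) (hA : ∀ w ∈ A, l₁ w = l₂ w)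
    {x : Fin n → ℝ} (hx : x ∈ convexHull ℝ (A : Set (Fin n → ℝ))) : l₁ x = l₂ x := by
  rw [Finset.convexHull_eq] at hx
  obtain ⟨w, _, hw1, hcm⟩ := hx
  rw [← hcm, affine_combo A w hw1 h1, affine_combo A w hw1 h2]
  exact Finset.sum_congr rfl fun y hy => by rw [hA y hy]

lemma affine_bound_on_hull {n : ℕ} {A : Finset (Fin n → ℝ)} {l : (Fin n → ℝ) → ℝ}
    (hl : IsRealAffine l) (hA : ∀ w ∈ A, 0 ≤ l w ∧ l w ≤ 1)
    {x : Fin n → ℝ} (hx : x ∈ convexHull ℝ (A : Set (Fin n → ℝ))) : 0 ≤ l x ∧ l x ≤ 1 := by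
  rw [Finset.convexHull_eq] at hx
  obtain ⟨w, hw0, hw1, hcm⟩ := hx
  rw [← hcm, affine_combo A w hw1 hl]
  constructor
  · exact Finset.sum_nonneg fun y hy => mul_nonneg (hw0 y hy) (hA y hy).1
  · calc ∑ y ∈ A, w y * l y ≤ ∑ y ∈ A, w y * 1 :=
        Finset.sum_le_sum fun y hy => mul_le_mul_of_nonneg_left (hA y hy).2 (hw0 y hy)
    _ = 1 := by simpa using hw1

lemma exists_affine_for_simplex {n : ℕ} (S : Finset (Fin n → ℝ))
    (hrat : ∀ w ∈ S, IsRatPoint w)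
    (hbas : ExtendsToBasis (tilde '' (S : Set (Fin n → ℝ))))
    (v : Fin n → ℝ) (av : ℕ) :
    ∃ (b0 : ℤ) (m : Fin n → ℤ),
      ∀ w ∈ S, (b0 : ℝ) + ∑ j, (m j : ℝ) * w j =
        if w = v then (av : ℝ) / (den v : ℝ) else 0 := by
  classical
  by_cases hv : v ∈ S
  · obtain ⟨b, hb⟩ := hbas
    obtain ⟨i₀, hi₀⟩ := hb ⟨v, hv, rfl⟩
    set g : (Fin (n + 1) → ℤ) →ₗ[ℤ] ℤ := b.coord i₀ with hg
    set c : Fin (n + 1) → ℤ := fun j => (av : ℤ) * g (fun k => if j = k then 1 else 0) with hc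
    have key : ∀ y : Fin (n + 1) → ℤ, (av : ℤ) * g y = ∑ j, y j * c j := by
      intro y
      have hy := pi_eq_sum_univ y
      calc (av : ℤ) * g y = (av : ℤ) * g (∑ i, y i • fun j => if i = j then 1 else 0) := by
            rw [← hy]
        _ = (av : ℤ) * ∑ i, y i * g (fun j => if i = j then 1 else 0) := by
            rw [map_sum]; simp only [map_smul, smul_eq_mul]
        _ = ∑ j, y j * c j := by
            rw [Finset.mul_sum]; exact Finset.sum_congr rfl fun j _ => by rw [hc]; ring
    refine ⟨c (Fin.last n), fun j => c j.castSucc, fun w hw => ?_⟩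
    have hwrat := hrat w hw
    have hdw : 0 < den w := (den_mem w hwrat).1
    have hdwR : (den w : ℝ) ≠ 0 := by exact_mod_cast hdw.ne'
    obtain ⟨iw, hiw⟩ := hb ⟨w, hw, rfl⟩
    have hmain : (den w : ℝ) * ((c (Fin.last n) : ℝ) + ∑ j, (c j.castSucc : ℝ) * w j)
        = (((av : ℤ) * g (tilde w) : ℤ) : ℝ) := by
      rw [key (tilde w)]
      rw [Fin.sum_univ_castSucc (f := fun j => tilde w j * c j)]
      push_cast
      rw [tilde_last]
      rw [mul_add, Finset.mul_sum, add_comm]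
      congr 1
      refine Finset.sum_congr rfl fun i _ => ?_
      rw [show ((tilde w i.castSucc : ℤ) : ℝ) = (den w : ℝ) * w i from tilde_castSucc w hwrat i]
      ring
    have hgval : g (tilde w) = if w = v then (1 : ℤ) else 0 := by
      by_cases hwv : w = v
      · subst hwv
        rw [if_pos rfl, ← hi₀, hg, Module.Basis.coord_apply, b.repr_self, Finsupp.single_apply, if_pos rfl]
      · rw [if_neg hwv, ← hiw, hg, Module.Basis.coord_apply, b.repr_self, Finsupp.single_apply,
          if_neg]
        intro hii
        apply hwv
        apply tilde_inj hwrat (hrat v hv)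
        rw [← hiw, hii, hi₀]
    by_cases hwv : w = v
    · subst hwv
      rw [if_pos rfl]
      rw [hgval, if_pos rfl, mul_one] at hmain
      rw [eq_div_iff hdwR, mul_comm]
      exact_mod_cast hmain
    · rw [if_neg hwv]
      rw [hgval, if_neg hwv, mul_zero] at hmain
      have := hmain
      push_cast at this
      exact (mul_eq_zero.1 this).resolve_left hdwR
  · exact ⟨0, 0, fun w hw => by
      rw [if_neg (fun hwv => hv (by rwa [hwv] at hw))]; simp⟩

lemma vertex_mem_of_mem_hull {n : ℕ} {Δ : Finset (Finset (Fin n → ℝ))}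
    (hT : IsTriangulation Δ) {x : Fin n → ℝ} (hx : x ∈ vertexSet Δ)
    {S : Finset (Fin n → ℝ)} (hS : S ∈ Δ)
    (hxS : x ∈ convexHull ℝ (S : Set (Fin n → ℝ))) : x ∈ S := by
  letI := Classical.decEq (Fin n → ℝ)
  obtain ⟨T, hT', hxT⟩ := Finset.mem_sup.1 hx
  have hsing : ({x} : Finset (Fin n → ℝ)) ∈ Δ :=
    hT.2.2.1 T hT' {x} (Finset.singleton_subset_iff.2 hxT) ⟨x, Finset.mem_singleton_self x⟩
  by_contra hxnS
  have hint := hT.2.2.2 {x} hsing S hS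
  have hxmem : x ∈ convexHull ℝ (({x} : Finset (Fin n → ℝ)) : Set (Fin n → ℝ)) := by
    rw [Finset.coe_singleton]
    exact subset_convexHull ℝ _ rfl
  have : x ∈ convexHull ℝ ((({x} : Finset (Fin n → ℝ)) ∩ S : Finset (Fin n → ℝ)) :
      Set (Fin n → ℝ)) := by
    rw [← hint]; exact ⟨hxmem, hxS⟩
  rw [Finset.singleton_inter_of_notMem hxnS] at this
  simp at this

/-- A regular triangulation of `[0,1]^n` with weights `a_i ∣ den(v_i)`
is a weighted triangulation whose hats exist and form a basic set (each hat is a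
McNaughton function). -/
theorem regular_weighted_triangulation_basic (n : ℕ)
    (Δ : Finset (Finset (Fin n → ℝ))) (hreg : IsRegularTriangulation Δ)
    (a : (Fin n → ℝ) → ℕ) (ha : ∀ v ∈ vertexSet Δ, 0 < a v ∧ a v ∣ den v) :
    IsWeighted Δ a ∧
      ∃ h : (Fin n → ℝ) → Cube n → ℝ, IsHatFamily Δ a h ∧
        ∀ v ∈ vertexSet Δ, IsMcNaughton (h v) := by
  letI := Classical.decEq (Fin n → ℝ)
  obtain ⟨htri, hbas⟩ := hreg
  refine ⟨⟨htri, ha⟩, ?_⟩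
  -- choose, for each simplex and each vertex, the integer affine function
  have hL : ∀ S : Finset (Fin n → ℝ), ∀ v : Fin n → ℝ, ∃ (b0 : ℤ) (m : Fin n → ℤ),
      S ∈ Δ → ∀ w ∈ S,
        (w = v → (b0 : ℝ) + ∑ j, (m j : ℝ) * w j = (a v : ℝ) / (den v : ℝ)) ∧
        (w ≠ v → (b0 : ℝ) + ∑ j, (m j : ℝ) * w j = 0) := by
    intro S v
    by_cases hS : S ∈ Δ
    · obtain ⟨b0, m, hb⟩ := exists_affine_for_simplex S
        (fun w hw => ((htri.1 S hS).2.1 w hw).2) (hbas S hS) v (a v)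
      refine ⟨b0, m, fun _ w hw => ?_⟩
      have hbw := hb w hw
      constructor
      · intro hwv; rwa [if_pos hwv] at hbw
      · intro hwv; rwa [if_neg hwv] at hbw
    · exact ⟨0, 0, fun h => absurd h hS⟩
  choose b0 m hbm using hL
  set L : Finset (Fin n → ℝ) → (Fin n → ℝ) → (Fin n → ℝ) → ℝ :=
    fun S v x => (b0 S v : ℝ) + ∑ j, (m S v j : ℝ) * x j with hLdef
  have hLaff : ∀ S v, IsRealAffine (L S v) := fun S v => ⟨_, _, fun _ => rfl⟩
  have hcov : ∀ x : Cube n, ∃ S, S ∈ Δ ∧ (x : Fin n → ℝ) ∈ convexHull ℝ (S : Set (Fin n → ℝ)) := by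
    intro x
    have hx : (x : Fin n → ℝ) ∈ ⋃ S ∈ Δ, convexHull ℝ (S : Set (Fin n → ℝ)) := by
      rw [htri.2.1]; exact x.2
    simpa using hx
  have hagree : ∀ S ∈ Δ, ∀ T ∈ Δ, ∀ v, ∀ x : Fin n → ℝ,
      x ∈ convexHull ℝ (S : Set (Fin n → ℝ)) → x ∈ convexHull ℝ (T : Set (Fin n → ℝ)) →
        L S v x = L T v x := by
    intro S hS T hT v x hxS hxT
    have hx : x ∈ convexHull ℝ ((S ∩ T : Finset (Fin n → ℝ)) : Set (Fin n → ℝ)) := by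
      rw [← htri.2.2.2 S hS T hT]; exact ⟨hxS, hxT⟩
    refine affine_eq_on_hull (hLaff S v) (hLaff T v) ?_ hx
    intro w hw
    show ((b0 S v : ℝ) + ∑ j, (m S v j : ℝ) * w j) = ((b0 T v : ℝ) + ∑ j, (m T v j : ℝ) * w j)
    have h1 := hbm S v hS w (Finset.mem_inter.1 hw).1
    have h2 := hbm T v hT w (Finset.mem_inter.1 hw).2
    by_cases hwv : w = v
    · rw [h1.1 hwv, h2.1 hwv]
    · rw [h1.2 hwv, h2.2 hwv]
  set h : (Fin n → ℝ) → Cube n → ℝ := fun v x => L (hcov x).choose v x with hhdef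
  have hval : ∀ v, ∀ x : Cube n, ∀ S ∈ Δ,
      (x : Fin n → ℝ) ∈ convexHull ℝ (S : Set (Fin n → ℝ)) → h v x = L S v x := by
    intro v x S hS hx
    exact hagree _ (hcov x).choose_spec.1 S hS v _ (hcov x).choose_spec.2 hx
  have hvert : ∀ v ∈ vertexSet Δ, v ∈ Cube n ∧ IsRatPoint v := by
    intro v hv
    obtain ⟨S, hS, hvS⟩ := Finset.mem_sup.1 hv
    exact (htri.1 S hS).2.1 v hvS
  have hLval : ∀ S ∈ Δ, ∀ v, ∀ w ∈ S,
      L S v w = if w = v then (a v : ℝ) / (den v : ℝ) else 0 := by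
    intro S hS v w hw
    show ((b0 S v : ℝ) + ∑ j, (m S v j : ℝ) * w j) = _
    by_cases hwv : w = v
    · rw [if_pos hwv]; exact (hbm S v hS w hw).1 hwv
    · rw [if_neg hwv]; exact (hbm S v hS w hw).2 hwv
  have hbound : ∀ v ∈ vertexSet Δ, ∀ x : Cube n, 0 ≤ h v x ∧ h v x ≤ 1 := by
    intro v hv x
    obtain ⟨S, hS, hx⟩ := hcov x
    rw [hval v x S hS hx]
    refine affine_bound_on_hull (hLaff S v) ?_ hx
    intro w hw
    rw [hLval S hS v w hw]
    split_ifs with hwv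
    · subst hwv
      have hdv : 0 < den w := (den_mem w (hvert w hv).2).1
      have hav : a w ≤ den w := Nat.le_of_dvd hdv (ha w hv).2
      constructor
      · positivity
      · rw [div_le_one (by exact_mod_cast hdv)]
        exact_mod_cast hav
    · exact ⟨le_refl 0, zero_le_one⟩
  refine ⟨h, ?_, ?_⟩
  · -- hat family
    intro v hv
    refine ⟨hbound v hv, ?_, ?_, ?_⟩
    · intro S hS
      exact ⟨L S v, hLaff S v, fun x hx => hval v x S hS hx⟩
    · intro x hxv
      obtain ⟨S, hS, hx⟩ := hcov x
      have hvS : v ∈ S := vertex_mem_of_mem_hull htri hv hS (hxv ▸ hx)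
      rw [hval v x S hS hx, hxv, hLval S hS v v hvS, if_pos rfl]
    · intro x hxvert hxne
      obtain ⟨S, hS, hx⟩ := hcov x
      have hxS : (x : Fin n → ℝ) ∈ S := vertex_mem_of_mem_hull htri hxvert hS hx
      rw [hval v x S hS hx, hLval S hS v _ hxS, if_neg hxne]
  · -- each hat is McNaughton
    intro v hv
    refine ⟨?_, hbound v hv, Δ.card, fun i => L ((Δ.equivFin.symm i : { S // S ∈ Δ }) : Finset (Fin n → ℝ)) v, ?_, ?_⟩
    · -- continuity
      apply LocallyFinite.continuous
        (f := fun S : { S // S ∈ Δ } =>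
          (Subtype.val : Cube n → (Fin n → ℝ)) ⁻¹' (convexHull ℝ ((S : Finset (Fin n → ℝ)) : Set (Fin n → ℝ))))
      · exact locallyFinite_of_finite _
      · ext x
        simp only [Set.mem_iUnion, Set.mem_univ, iff_true]
        obtain ⟨S, hS, hx⟩ := hcov x
        exact ⟨⟨S, hS⟩, hx⟩
      · intro S
        exact (((S : Finset (Fin n → ℝ)) : Set (Fin n → ℝ)).toFinite.isCompact_convexHull ℝ |>.isClosed).preimage
          continuous_subtype_val
      · intro S
        have hc : Continuous (fun x : Cube n => L (S : Finset (Fin n → ℝ)) v (x : Fin n → ℝ)) := by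
          apply Continuous.add continuous_const
          exact continuous_finset_sum _ fun j _ =>
            continuous_const.mul ((continuous_apply j).comp continuous_subtype_val)
        refine hc.continuousOn.congr ?_
        intro x hx
        exact hval v x (S : Finset (Fin n → ℝ)) S.2 hx
    · intro i
      exact ⟨b0 _ v, m _ v, fun _ => rfl⟩
    · intro x
      obtain ⟨S, hS, hx⟩ := hcov x
      refine ⟨Δ.equivFin ⟨S, hS⟩, ?_⟩
      show h v x = L ((Δ.equivFin.symm (Δ.equivFin ⟨S, hS⟩) : { S // S ∈ Δ }) : Finset (Fin n → ℝ)) v (x : Fin n → ℝ)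
      rw [Equiv.symm_apply_apply]
      exact hval v x S hS hx



end MVPaper
end

section
/- Suppose the weighted triangulation (Δ,(a_1,…,a_u)) of [0,1]^n, with vertices v_1,…,v_u, determines a basic set H_{Δ,a} = {h_1,…,h_u}, and let A be the subalgebra of M([0,1]^n) generated by H_{Δ,a}. Then: (1) A separates points of [0,1]^n; (2) setting m_i = den(v_i)/a_i (a positive integer), the pointwise real sum m_1·h_1 + … + m_u·h_u is the constant function 1 on [0,1]^n; and (3) for every subset C ⊆ {1,…,u} of cardinality k ≥ 1 such that the pointwise minimum of {h_i : i ∈ C} is not identically zero, the set {x ∈ [0,1]^n : h_j(x) = 0 for all j ∉ C} is homeomorphic to a (k−1)-dimensional simplex (equivalently, to the standard (k−1)-simplex). -/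
namespace MVPaper

/-! ### Auxiliary lemmas for the proof of `basic_set_is_basis` -/

lemma den_pos' {n : ℕ} {v : Fin n → ℝ} (hv : IsRatPoint v) : 0 < den v := by
  choose q hq using hv
  have hmem : (∏ j, (q j).den) ∈ {d : ℕ | 0 < d ∧ ∀ i, ∃ c : ℤ, (d : ℝ) * v i = (c : ℝ)} := by
    constructor
    · exact Finset.prod_pos fun j _ => (q j).pos
    · intro i
      refine ⟨(q i).num * ∏ j ∈ Finset.univ.erase i, ((q j).den : ℤ), ?_⟩
      have key : ((∏ j, (q j).den : ℕ) : ℚ) * q i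
          = (((q i).num * ∏ j ∈ Finset.univ.erase i, ((q j).den : ℤ) : ℤ) : ℚ) := by
        push_cast
        rw [← Finset.mul_prod_erase Finset.univ (fun j => ((q j).den : ℚ)) (Finset.mem_univ i)]
        rw [mul_comm ((q i).den : ℚ), mul_assoc, mul_comm _ (q i), ← mul_assoc,
          mul_assoc, Rat.mul_den_eq_num, mul_comm]
      have := congrArg (fun r : ℚ => (r : ℝ)) key
      push_cast at this ⊢
      rw [hq i]
      exact_mod_cast this
  have := Nat.sInf_mem ⟨_, hmem⟩
  exact this.1

lemma isRealAffine_sum {n : ℕ} {l : (Fin n → ℝ) → ℝ} (hl : IsRealAffine l) {ι : Type*}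
    (t : Finset ι) (w : ι → ℝ) (z : ι → (Fin n → ℝ)) (hw : ∑ i ∈ t, w i = 1) :
    l (∑ i ∈ t, w i • z i) = ∑ i ∈ t, w i * l (z i) := by
  obtain ⟨b, m, hm⟩ := hl
  simp only [hm]
  have happ : ∀ j, (∑ i ∈ t, w i • z i) j = ∑ i ∈ t, w i * z i j := by
    intro j; rw [Finset.sum_apply]; simp
  simp only [happ]
  have hswap : ∑ j, m j * ∑ i ∈ t, w i * z i j = ∑ i ∈ t, w i * ∑ j, m j * z i j := by
    simp_rw [Finset.mul_sum]
    rw [Finset.sum_comm]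
    exact Finset.sum_congr rfl fun i _ => Finset.sum_congr rfl fun j _ => by ring
  rw [hswap]
  have hfin : ∑ i ∈ t, w i * (b + ∑ j, m j * z i j)
      = (∑ i ∈ t, w i) * b + ∑ i ∈ t, w i * ∑ j, m j * z i j := by
    rw [Finset.sum_mul, ← Finset.sum_add_distrib]
    exact Finset.sum_congr rfl fun i _ => by ring
  rw [hfin, hw, one_mul]

lemma mem_vertexSet_iff {n : ℕ} {Δ : Finset (Finset (Fin n → ℝ))} {v : Fin n → ℝ} :
    v ∈ vertexSet Δ ↔ ∃ S ∈ Δ, v ∈ S := by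
  classical
  simp [vertexSet, Finset.mem_sup]

/-- Each vertex is a rational point of the cube. -/
lemma vertex_mem_cube {n : ℕ} {Δ : Finset (Finset (Fin n → ℝ))}
    (htri : IsTriangulation Δ) {v : Fin n → ℝ} (hv : v ∈ vertexSet Δ) :
    v ∈ Cube n ∧ IsRatPoint v := by
  obtain ⟨S, hS, hvS⟩ := mem_vertexSet_iff.mp hv
  exact (htri.1 S hS).2.1 v hvS

/-- Key pointwise structure lemma: every point of the cube lies in a simplex of `Δ`,
with convex weights, and every hat evaluates via these weights. -/
lemma hat_repr {n : ℕ} {Δ : Finset (Finset (Fin n → ℝ))}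
    {a : (Fin n → ℝ) → ℕ} {h : (Fin n → ℝ) → Cube n → ℝ}
    (hw : IsWeighted Δ a) (hfam : IsHatFamily Δ a h) (x : Cube n) :
    ∃ S ∈ Δ, ∃ w : (Fin n → ℝ) → ℝ,
      (∀ v ∈ S, 0 ≤ w v) ∧ (∑ v ∈ S, w v = 1) ∧
      ((x : Fin n → ℝ) = ∑ v ∈ S, w v • v) ∧
      ∀ v ∈ vertexSet Δ,
        h v x = if v ∈ S then w v * ((a v : ℝ) / (den v : ℝ)) else 0 := by
  classical
  obtain ⟨htri, hwt⟩ := hw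
  obtain ⟨hsimp, hcover, hface, hinter⟩ := htri
  have hx : (x : Fin n → ℝ) ∈ ⋃ S ∈ Δ, convexHull ℝ (S : Set (Fin n → ℝ)) := by
    rw [hcover]; exact x.2
  obtain ⟨S, hS, hxS⟩ := Set.mem_iUnion₂.mp hx
  obtain ⟨w, hw0, hw1, hwx⟩ := Finset.mem_convexHull.mp hxS
  rw [Finset.centerMass_eq_of_sum_1 _ _ hw1] at hwx
  have hxsum : (x : Fin n → ℝ) = ∑ v ∈ S, w v • v := by
    rw [← hwx]; exact (Finset.sum_congr rfl fun v _ => rfl)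
  refine ⟨S, hS, w, hw0, hw1, hxsum, ?_⟩
  intro v hv
  obtain ⟨hbd, haff, hval, hzero⟩ := hfam v hv
  obtain ⟨l, hl, hlx⟩ := haff S hS
  have hScube : ∀ u ∈ S, u ∈ Cube n := fun u hu => ((hsimp S hS).2.1 u hu).1
  have hux : h v x = l (x : Fin n → ℝ) := hlx x hxS
  have hlv : ∀ u, (hu : u ∈ S) → l u = h v ⟨u, hScube u hu⟩ := by
    intro u hu
    exact (hlx ⟨u, hScube u hu⟩ (subset_convexHull ℝ _ (by exact_mod_cast hu))).symm
  have hvals : ∀ u ∈ S, l u = if u = v then (a v : ℝ) / (den v : ℝ) else 0 := by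
    intro u hu
    rw [hlv u hu]
    by_cases huv : u = v
    · rw [if_pos huv]
      exact hval ⟨u, hScube u hu⟩ huv
    · rw [if_neg huv]
      exact hzero ⟨u, hScube u hu⟩ (mem_vertexSet_iff.mpr ⟨S, hS, hu⟩) huv
  calc h v x = l (x : Fin n → ℝ) := hux
    _ = ∑ u ∈ S, w u * l u := by rw [hxsum]; exact isRealAffine_sum hl S w _ hw1
    _ = ∑ u ∈ S, (if u = v then w u * ((a v : ℝ) / (den v : ℝ)) else 0) := by
        refine Finset.sum_congr rfl fun u hu => ?_
        rw [hvals u hu]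
        by_cases huv : u = v <;> simp [huv]
    _ = if v ∈ S then w v * ((a v : ℝ) / (den v : ℝ)) else 0 := Finset.sum_ite_eq' S v _

/-- The multiplier identity `m_v · (a_v / den v) = 1`. -/
lemma mult_cancel {n : ℕ} {Δ : Finset (Finset (Fin n → ℝ))}
    {a : (Fin n → ℝ) → ℕ} (hw : IsWeighted Δ a) {v : Fin n → ℝ} (hv : v ∈ vertexSet Δ) :
    ((den v / a v : ℕ) : ℝ) * ((a v : ℝ) / (den v : ℝ)) = 1 := by
  obtain ⟨ha, hdvd⟩ := hw.2 v hv
  have hden : 0 < den v := den_pos' (vertex_mem_cube hw.1 hv).2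
  have ha' : (a v : ℝ) ≠ 0 := Nat.cast_ne_zero.mpr ha.ne'
  have hden' : (den v : ℝ) ≠ 0 := Nat.cast_ne_zero.mpr hden.ne'
  rw [Nat.cast_div hdvd ha']
  field_simp

/-- Representation of points via hats: `x = Σ m_v h_v(x) v`, and the sum of the
coefficients is 1. -/
lemma hat_point_repr {n : ℕ} {Δ : Finset (Finset (Fin n → ℝ))}
    {a : (Fin n → ℝ) → ℕ} {h : (Fin n → ℝ) → Cube n → ℝ}
    (hw : IsWeighted Δ a) (hfam : IsHatFamily Δ a h) (x : Cube n) :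
    ((x : Fin n → ℝ) = ∑ v ∈ vertexSet Δ, (((den v / a v : ℕ) : ℝ) * h v x) • v) ∧
    (∑ v ∈ vertexSet Δ, ((den v / a v : ℕ) : ℝ) * h v x = 1) := by
  classical
  obtain ⟨S, hS, w, hw0, hw1, hxsum, hhat⟩ := hat_repr hw hfam x
  have hSsub : S ⊆ vertexSet Δ := fun u hu => mem_vertexSet_iff.mpr ⟨S, hS, hu⟩
  have hcoef : ∀ v ∈ vertexSet Δ,
      ((den v / a v : ℕ) : ℝ) * h v x = if v ∈ S then w v else 0 := by
    intro v hv
    rw [hhat v hv]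
    by_cases hvS : v ∈ S
    · rw [if_pos hvS, if_pos hvS, mul_comm (w v), ← mul_assoc, mult_cancel hw hv, one_mul]
    · rw [if_neg hvS, if_neg hvS, mul_zero]
  have h1 : ∑ v ∈ vertexSet Δ, (((den v / a v : ℕ) : ℝ) * h v x) • v
      = ∑ v ∈ S, w v • v := by
    rw [Finset.sum_congr rfl fun v hv => by rw [hcoef v hv, ite_smul, zero_smul],
      Finset.sum_ite_mem, Finset.inter_eq_right.mpr hSsub]
  refine ⟨hxsum.trans h1.symm, ?_⟩
  rw [Finset.sum_congr rfl hcoef, Finset.sum_ite_mem,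
    Finset.inter_eq_right.mpr hSsub, hw1]

/-- A basic set of hats of a weighted triangulation is a basis of the
subalgebra it generates: the generated algebra separates points, the hats with the
multipliers `m_i = den(v_i)/a_i` sum to `1`, and the common-zero loci condition. -/
theorem basic_set_is_basis (n : ℕ) (Δ : Finset (Finset (Fin n → ℝ)))
    (a : (Fin n → ℝ) → ℕ) (h : (Fin n → ℝ) → Cube n → ℝ)
    (hw : IsWeighted Δ a) (hfam : IsHatFamily Δ a h)
    (hbasic : ∀ v ∈ vertexSet Δ, IsMcNaughton (h v)) :
    Separates (mvGen (hatSet Δ h)) ∧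
    (∀ x : Cube n, ∑ v ∈ vertexSet Δ, ((den v / a v : ℕ) : ℝ) * h v x = 1) ∧
    ∀ C : Finset (Fin n → ℝ), C ⊆ vertexSet Δ → ∀ hC : C.Nonempty,
      (∃ x : Cube n, C.inf' hC (fun v => h v x) ≠ 0) →
      Nonempty ({x : Cube n | ∀ v ∈ vertexSet Δ, v ∉ C → h v x = 0} ≃ₜ
        stdSimplex ℝ (Fin C.card)) := by
  classical
  obtain ⟨htri, hwt⟩ := hw
  have hw' : IsWeighted Δ a := ⟨htri, hwt⟩
  refine ⟨?_, fun x => (hat_point_repr hw' hfam x).2, ?_⟩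
  · -- (1) separation
    intro x y hxy
    by_contra hcon
    push_neg at hcon
    apply hxy
    have hagree : ∀ v ∈ vertexSet Δ, h v x = h v y := by
      intro v hv
      have hmem : h v ∈ mvGen (hatSet Δ h) :=
        Set.mem_sInter.mpr fun A hA => hA.2 ⟨v, Finset.mem_coe.mpr hv, rfl⟩
      exact hcon _ hmem
    have hx := (hat_point_repr hw' hfam x).1
    have hy := (hat_point_repr hw' hfam y).1
    apply Subtype.ext
    rw [hx, hy]
    exact Finset.sum_congr rfl fun v hv => by rw [hagree v hv]
  · -- (3) common-zero loci
    rintro C hCsub hC ⟨x, hinf⟩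
    have hpos : ∀ v ∈ C, 0 < h v x := by
      intro v hv
      have h0 : (0 : ℝ) ≤ C.inf' hC fun v => h v x :=
        Finset.le_inf' _ _ fun u hu => ((hfam u (hCsub hu)).1 x).1
      have hle : C.inf' hC (fun v => h v x) ≤ h v x := Finset.inf'_le _ hv
      exact lt_of_lt_of_le (lt_of_le_of_ne h0 (Ne.symm hinf)) hle
    obtain ⟨S, hS, w, hw0, hw1, hxsum, hhat⟩ := hat_repr hw' hfam x
    have hCS : C ⊆ S := by
      intro v hv
      by_contra hvS
      have hz := hhat v (hCsub hv)
      rw [if_neg hvS] at hz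
      exact (hpos v hv).ne' hz
    have hCΔ : C ∈ Δ := htri.2.2.1 S hS C hCS hC
    set k := C.card with hk
    set e : Fin k ≃ {v // v ∈ C} := C.equivFin.symm with he
    set p : Fin k → (Fin n → ℝ) := fun i => (e i : Fin n → ℝ) with hp
    have hSind := (htri.1 S hS).2.2
    have hCind : AffineIndependent ℝ (fun v : (C : Set (Fin n → ℝ)) => (v : Fin n → ℝ)) :=
      hSind.mono (Finset.coe_subset.mpr hCS)
    have hpind : AffineIndependent ℝ p := (affineIndependent_equiv e).mpr hCind
    have hpC : ∀ i, p i ∈ C := fun i => (e i).2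
    have hpvert : ∀ i, p i ∈ vertexSet Δ := fun i => hCsub (hpC i)
    have hpcube : ∀ i, p i ∈ Cube n := fun i => (vertex_mem_cube htri (hpvert i)).1
    set T : Set (Cube n) := {x : Cube n | ∀ v ∈ vertexSet Δ, v ∉ C → h v x = 0} with hTdef
    -- the convex combination of vertices of C lies in the cube
    have hcube : ∀ W : Fin k → ℝ, (∀ i, 0 ≤ W i) → (∑ i, W i = 1) →
        (∑ i, W i • p i) ∈ Cube n := by
      intro W hW0 hW1 j
      have happ : (∑ i, W i • p i) j = ∑ i, W i * p i j := by
        rw [Finset.sum_apply]; simp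
      constructor
      · rw [happ]
        exact Finset.sum_nonneg fun i _ => mul_nonneg (hW0 i) (hpcube i j).1
      · rw [happ, ← hW1]
        exact Finset.sum_le_sum fun i _ =>
          (mul_le_of_le_one_right (hW0 i) (hpcube i j).2).trans le_rfl
    -- the convex combination lies in the common-zero set T
    have hmemT : ∀ W : Fin k → ℝ, (hW0 : ∀ i, 0 ≤ W i) → (hW1 : ∑ i, W i = 1) →
        (⟨∑ i, W i • p i, hcube W hW0 hW1⟩ : Cube n) ∈ T := by
      intro W hW0 hW1 v hv hvC
      obtain ⟨hbd, haff, hval, hzero⟩ := hfam v hv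
      obtain ⟨l, hl, hlx⟩ := haff C hCΔ
      have hhull : (∑ i, W i • p i) ∈ convexHull ℝ (C : Set (Fin n → ℝ)) :=
        Convex.sum_mem (convex_convexHull ℝ _) (fun i _ => hW0 i)
          hW1 (fun i _ => subset_convexHull ℝ _ (Finset.mem_coe.mpr (hpC i)))
      have h1 : h v ⟨∑ i, W i • p i, hcube W hW0 hW1⟩ = l (∑ i, W i • p i) :=
        hlx _ hhull
      rw [h1, isRealAffine_sum hl Finset.univ W p hW1]
      refine Finset.sum_eq_zero fun i _ => ?_
      have hpi : l (p i) = h v ⟨p i, hpcube i⟩ :=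
        (hlx ⟨p i, hpcube i⟩ (subset_convexHull ℝ _ (Finset.mem_coe.mpr (hpC i)))).symm
      have hne : p i ≠ v := fun hh => hvC (hh ▸ hpC i)
      rw [hpi, hzero ⟨p i, hpcube i⟩ (hpvert i) hne, mul_zero]
    -- forward map
    set F : ↥(stdSimplex ℝ (Fin k)) → ↥T :=
      fun W => ⟨⟨∑ i, W.1 i • p i, hcube W.1 W.2.1 W.2.2⟩, hmemT W.1 W.2.1 W.2.2⟩ with hF
    have hinj : Function.Injective F := by
      intro W1 W2 hEq
      have hsum : ∑ i, W1.1 i • p i = ∑ i, W2.1 i • p i := by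
        have := congrArg (fun z : ↥T => (z : Cube n).1) hEq
        exact this
      apply Subtype.ext
      refine (affineIndependent_iff_eq_of_fintype_affineCombination_eq ℝ p).mp hpind
        W1.1 W2.1 W1.2.2 W2.2.2 ?_
      rw [Finset.affineCombination_eq_linear_combination _ _ _ W1.2.2,
        Finset.affineCombination_eq_linear_combination _ _ _ W2.2.2]
      exact hsum
    have hsurj : Function.Surjective F := by
      intro y
      obtain ⟨S', hS', w', hw0', hw1', hysum, hhat'⟩ := hat_repr hw' hfam y.1
      have hzero' : ∀ v ∈ S', v ∉ C → w' v = 0 := by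
        intro v hvS hvC
        have hv' : v ∈ vertexSet Δ := mem_vertexSet_iff.mpr ⟨S', hS', hvS⟩
        have h0 : h v y.1 = 0 := y.2 v hv' hvC
        rw [hhat' v hv', if_pos hvS] at h0
        have hapos : (0 : ℝ) < (a v : ℝ) / (den v : ℝ) :=
          div_pos (Nat.cast_pos.mpr (hwt v hv').1)
            (Nat.cast_pos.mpr (den_pos' (vertex_mem_cube htri hv').2))
        rcases mul_eq_zero.mp h0 with h' | h'
        · exact h'
        · exact absurd h' hapos.ne'
      set W : Fin k → ℝ := fun i => if p i ∈ S' then w' (p i) else 0 with hW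
      have hW0 : ∀ i, 0 ≤ W i := by
        intro i
        simp only [hW]
        split
        · exact hw0' _ (by assumption)
        · exact le_rfl
      have hsub : C ∩ S' ⊆ S' := Finset.inter_subset_right
      have hvan : ∀ v ∈ S', v ∉ C ∩ S' → w' v = 0 := by
        intro v hvS hvI
        exact hzero' v hvS fun hvC => hvI (Finset.mem_inter.mpr ⟨hvC, hvS⟩)
      have hW1 : ∑ i, W i = 1 := by
        have h1 : ∑ i, W i = ∑ c : {v // v ∈ C}, (if (c : Fin n → ℝ) ∈ S' then w' c else 0) :=
          Equiv.sum_comp e (fun c : {v // v ∈ C} => if (c : Fin n → ℝ) ∈ S' then w' c else 0)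
        rw [h1, Finset.sum_coe_sort C (fun v => if v ∈ S' then w' v else 0),
          Finset.sum_ite_mem, Finset.sum_subset hsub hvan, hw1']
      have hWsum : ∑ i, W i • p i = (y.1 : Fin n → ℝ) := by
        have h1 : ∑ i, W i • p i
            = ∑ c : {v // v ∈ C}, (if (c : Fin n → ℝ) ∈ S' then w' c else 0) • (c : Fin n → ℝ) :=
          Equiv.sum_comp e (fun c : {v // v ∈ C} =>
            (if (c : Fin n → ℝ) ∈ S' then w' c else 0) • (c : Fin n → ℝ))
        rw [h1, Finset.sum_coe_sort C (fun v => (if v ∈ S' then w' v else 0) • v)]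
        simp only [ite_smul, zero_smul]
        rw [Finset.sum_ite_mem,
          Finset.sum_subset hsub fun v hvS hvI => by rw [hvan v hvS hvI, zero_smul], hysum]
      refine ⟨⟨W, hW0, hW1⟩, ?_⟩
      apply Subtype.ext
      apply Subtype.ext
      exact hWsum
    have hFc : Continuous F := by
      apply Continuous.subtype_mk
      apply Continuous.subtype_mk
      exact continuous_finset_sum _ fun i _ =>
        ((continuous_apply i).comp continuous_subtype_val).smul continuous_const
    haveI : CompactSpace ↥(stdSimplex ℝ (Fin k)) :=
      isCompact_iff_compactSpace.mp (isCompact_stdSimplex _ _)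
    exact ⟨(Continuous.homeoOfEquivCompactToT2
      (f := Equiv.ofBijective F ⟨hinj, hsurj⟩) hFc).symm⟩


end MVPaper
end
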